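/- Let (C, C₋, C₊) be a Reedy category. The quotient functor q : ∫N^{-,+}(C) → Down_*(C) (identity on objects, sending each morphism to its ∼-class) is a strict 1-localization of ∫N^{-,+}(C) at the class Γ₋ of morphisms of the form (σ, id_{X∘σ}) : ([m], X ∘ σ) → ([n], X) with σ : [m] → [n] surjective in Δ. That is: q sends every morphism of Γ₋ to an isomorphism, and for every category E and functor G : ∫N^{-,+}(C) → E sending every morphism of Γ₋ to an isomorphism, there exists a unique functor H : Down_*(C) → E with H ∘ q = G. -/

import Mathlib

namespace ReedyPaper

open CategoryTheory

universe v₂ u₂ v₁ u₁ v u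

variable {C : Type u} [Category.{v} C]

def IsIdMor {x y : C} (f : x ⟶ y) : Prop := ∃ h : x = y, f = eqToHom h

structure ReedyStruct (C : Type u) [Category.{v} C] where
  neg : MorphismProperty C
  pos : MorphismProperty C
  neg_id : ∀ x : C, neg (𝟙 x)
  pos_id : ∀ x : C, pos (𝟙 x)
  neg_comp : ∀ {x y z : C} (f : x ⟶ y) (g : y ⟶ z), neg f → neg g → neg (f ≫ g)
  pos_comp : ∀ {x y z : C} (f : x ⟶ y) (g : y ⟶ z), pos f → pos g → pos (f ≫ g)
  factor_existsUnique : ∀ {x y : C} (f : x ⟶ y),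
    ∃! t : Σ z : C, (x ⟶ z) × (z ⟶ y), neg t.2.1 ∧ pos t.2.2 ∧ t.2.1 ≫ t.2.2 = f
  wf : WellFounded (fun x y : C =>
    (∃ f : x ⟶ y, pos f ∧ ¬ IsIdMor f) ∨ (∃ f : y ⟶ x, neg f ∧ ¬ IsIdMor f))

structure ChainObj (C : Type u) [Category.{v} C] where
  n : ℕ
  X : Fin (n + 1) ⥤ C

structure ChainHom (P Q : ChainObj C) where
  α : Fin (P.n + 1) →o Fin (Q.n + 1)
  θ : ∀ i : Fin (P.n + 1), P.X.obj i ⟶ Q.X.obj (α i)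
  natural : ∀ {i j : Fin (P.n + 1)} (h : i ≤ j),
    P.X.map (homOfLE h) ≫ θ j = θ i ≫ Q.X.map (homOfLE (α.monotone h))

theorem ChainHom.ext' {P Q : ChainObj C} {f g : ChainHom P Q}
    (hα : f.α = g.α) (hθ : HEq f.θ g.θ) : f = g := by
  cases f; cases g; cases hα; cases hθ; rfl

def ChainHom.id (P : ChainObj C) : ChainHom P P where
  α := OrderHom.id
  θ i := 𝟙 _
  natural h := (Category.comp_id _).trans (Category.id_comp _).symm

def ChainHom.comp {P Q S : ChainObj C} (f : ChainHom P Q) (g : ChainHom Q S) :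
    ChainHom P S where
  α := g.α.comp f.α
  θ i := f.θ i ≫ g.θ (f.α i)
  natural {i j} h := by
    show P.X.map _ ≫ (f.θ j ≫ g.θ (f.α j)) = (f.θ i ≫ g.θ (f.α i)) ≫ S.X.map _
    rw [← Category.assoc, f.natural h, Category.assoc, g.natural (f.α.monotone h),
      ← Category.assoc]
    rfl

instance : Category (ChainObj C) where
  Hom := ChainHom
  id := ChainHom.id
  comp := ChainHom.comp
  id_comp f := ChainHom.ext' rfl (heq_of_eq (funext fun i => Category.id_comp _))
  comp_id f := ChainHom.ext' rfl (heq_of_eq (funext fun i => Category.comp_id _))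
  assoc f g h := ChainHom.ext' rfl (heq_of_eq (funext fun i => Category.assoc _ _ _))

/-- The partial order on the hom-sets of `∫N(C)` (and of `∫N^{-,+}(C)`):
`(α, θ) ≤ (α', θ')` iff `α ≤ α'` pointwise and `θ'ᵢ = Y(α(i) ≤ α'(i)) ∘ θᵢ` for all `i`. -/
def ChainHom.le {P Q : ChainObj C} (f g : ChainHom P Q) : Prop :=
  (∀ i, f.α i ≤ g.α i) ∧
    ∀ (i : Fin (P.n + 1)) (h : f.α i ≤ g.α i), g.θ i = f.θ i ≫ Q.X.map (homOfLE h)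

theorem ChainHom.le_comp_right {P Q S : ChainObj C} {f f' : P ⟶ Q} (g : Q ⟶ S)
    (h : ChainHom.le f f') : ChainHom.le (f ≫ g) (f' ≫ g) := by
  refine ⟨fun i => g.α.monotone (h.1 i), fun i hi => ?_⟩
  show f'.θ i ≫ g.θ (f'.α i) = (f.θ i ≫ g.θ (f.α i)) ≫ S.X.map (homOfLE hi)
  rw [h.2 i (h.1 i), Category.assoc, g.natural (h.1 i), ← Category.assoc]
  rfl

theorem ChainHom.le_comp_left {P Q S : ChainObj C} (f : P ⟶ Q) {g g' : Q ⟶ S}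
    (h : ChainHom.le g g') : ChainHom.le (f ≫ g) (f ≫ g') := by
  refine ⟨fun i => h.1 (f.α i), fun i hi => ?_⟩
  show f.θ i ≫ g'.θ (f.α i) = (f.θ i ≫ g.θ (f.α i)) ≫ S.X.map (homOfLE hi)
  rw [h.2 (f.α i) (h.1 (f.α i)), ← Category.assoc]
  rfl

/-- Objects of `∫N^{-,+}(C)`: chains all of whose morphisms lie in `C₋`. -/
structure NegObj (R : ReedyStruct C) where
  n : ℕ
  X : Fin (n + 1) ⥤ C
  negMap : ∀ {i j : Fin (n + 1)} (h : i ≤ j), R.neg (X.map (homOfLE h))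

variable {R : ReedyStruct C}

/-- The underlying object of `∫N(C)`. -/
def NegObj.chain (P : NegObj R) : ChainObj C := ⟨P.n, P.X⟩

/-- Morphisms of `∫N^{-,+}(C)`: morphisms of `∫N(C)` all of whose components lie in `C₊`. -/
def NegHomT (P Q : NegObj R) : Type v :=
  { f : P.chain ⟶ Q.chain // ∀ i, R.pos (f.θ i) }

def NegHomT.id (P : NegObj R) : NegHomT P P := ⟨𝟙 P.chain, fun _ => R.pos_id _⟩

def NegHomT.comp {P Q S : NegObj R} (f : NegHomT P Q) (g : NegHomT Q S) : NegHomT P S :=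
  ⟨f.1 ≫ g.1, fun i => by
    show R.pos (f.1.θ i ≫ g.1.θ (f.1.α i))
    exact R.pos_comp _ _ (f.2 i) (g.2 _)⟩

theorem NegHomT.id_comp {P Q : NegObj R} (f : NegHomT P Q) : (NegHomT.id P).comp f = f := by
  apply Subtype.ext
  show 𝟙 P.chain ≫ f.1 = f.1
  exact Category.id_comp f.1

theorem NegHomT.comp_id {P Q : NegObj R} (f : NegHomT P Q) : f.comp (NegHomT.id Q) = f := by
  apply Subtype.ext
  show f.1 ≫ 𝟙 Q.chain = f.1
  exact Category.comp_id f.1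

theorem NegHomT.comp_assoc {P Q S T : NegObj R} (f : NegHomT P Q) (g : NegHomT Q S)
    (h : NegHomT S T) : (f.comp g).comp h = f.comp (g.comp h) := by
  apply Subtype.ext
  show (f.1 ≫ g.1) ≫ h.1 = f.1 ≫ (g.1 ≫ h.1)
  exact Category.assoc f.1 g.1 h.1

/-- The category `∫N^{-,+}(C)`. -/
instance : Category (NegObj R) where
  Hom := NegHomT
  id := NegHomT.id
  comp := NegHomT.comp
  id_comp := NegHomT.id_comp
  comp_id := NegHomT.comp_id
  assoc := NegHomT.comp_assoc

/-- The order on the hom-sets of `∫N^{-,+}(C)`. -/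
def NegHom.le {P Q : NegObj R} (f g : P ⟶ Q) : Prop := ChainHom.le f.1 g.1

/-- The equivalence relation `∼` on the hom-sets of `∫N^{-,+}(C)`: the
symmetric-transitive closure of `≤`. -/
def NegHom.equiv {P Q : NegObj R} (f g : P ⟶ Q) : Prop :=
  Relation.EqvGen (fun a b : P ⟶ Q => NegHom.le a b) f g

theorem NegHom.le_comp_right {P Q S : NegObj R} {f f' : P ⟶ Q} (g : Q ⟶ S)
    (h : NegHom.le f f') : NegHom.le (f ≫ g) (f' ≫ g) :=
  ChainHom.le_comp_right g.1 h

theorem NegHom.le_comp_left {P Q S : NegObj R} (f : P ⟶ Q) {g g' : Q ⟶ S}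
    (h : NegHom.le g g') : NegHom.le (f ≫ g) (f ≫ g') :=
  ChainHom.le_comp_left f.1 h

/-- Identity-reflectingness of a chain. -/
def NegObj.IdRefl (P : NegObj R) : Prop :=
  ∀ {i j : Fin (P.n + 1)} (h : i ≤ j), IsIdMor (P.X.map (homOfLE h)) → i = j

/-- Objects of `∫N^{--,+}_+(C)`: identity-reflecting chains in `C₋`. -/
structure StrictObj (R : ReedyStruct C) where
  toNegObj : NegObj R
  idRefl : toNegObj.IdRefl

/-- Morphisms of `∫N^{--,+}_+(C)`: morphisms of `∫N^{-,+}(C)` with `α` injective. -/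
def StrictHomT (P Q : StrictObj R) : Type v :=
  { f : P.toNegObj ⟶ Q.toNegObj // Function.Injective f.1.α }

def StrictHomT.id (P : StrictObj R) : StrictHomT P P :=
  ⟨𝟙 P.toNegObj, fun _ _ h => h⟩

def StrictHomT.comp {P Q S : StrictObj R} (f : StrictHomT P Q) (g : StrictHomT Q S) :
    StrictHomT P S :=
  ⟨f.1 ≫ g.1, fun _ _ h => f.2 (g.2 h)⟩

/-- The category `∫N^{--,+}_+(C)`. -/
instance : Category (StrictObj R) where
  Hom := StrictHomT
  id := StrictHomT.id
  comp := StrictHomT.comp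
  id_comp f := Subtype.ext (Category.id_comp f.1)
  comp_id f := Subtype.ext (Category.comp_id f.1)
  assoc f g h := Subtype.ext (Category.assoc f.1 g.1 h.1)

/-- The order on the hom-sets of `∫N^{--,+}_+(C)`. -/
def StrictHom.le {P Q : StrictObj R} (f g : P ⟶ Q) : Prop := NegHom.le f.1 g.1

/-- The equivalence relation `∼` on the hom-sets of `∫N^{--,+}_+(C)`. -/
def StrictHom.equiv {P Q : StrictObj R} (f g : P ⟶ Q) : Prop :=
  Relation.EqvGen (fun a b : P ⟶ Q => StrictHom.le a b) f g

theorem StrictHom.le_comp_right {P Q S : StrictObj R} {f f' : P ⟶ Q} (g : Q ⟶ S)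
    (h : StrictHom.le f f') : StrictHom.le (f ≫ g) (f' ≫ g) :=
  NegHom.le_comp_right g.1 h

theorem StrictHom.le_comp_left {P Q S : StrictObj R} (f : P ⟶ Q) {g g' : Q ⟶ S}
    (h : StrictHom.le g g') : StrictHom.le (f ≫ g) (f ≫ g') :=
  NegHom.le_comp_left f.1 h

/-- Objects of `Down_*(C)`: the same as those of `∫N^{-,+}(C)`. -/
structure DownStar (R : ReedyStruct C) where
  obj : NegObj R

/-- The category `Down_*(C)`: hom-sets are the quotients of those of `∫N^{-,+}(C)`
by the symmetric-transitive closure of `≤`. -/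
instance : Category (DownStar R) where
  Hom P Q := Quot (fun f g : P.obj ⟶ Q.obj => NegHom.le f g)
  id P := Quot.mk _ (𝟙 P.obj)
  comp {P Q S} f g :=
    Quot.lift
      (fun f' => Quot.lift (fun g' => Quot.mk _ (f' ≫ g'))
        (fun _ _ hg => Quot.sound (NegHom.le_comp_left f' hg)) g)
      (fun f₁ f₂ hf => Quot.inductionOn g (fun g' =>
        Quot.sound (NegHom.le_comp_right g' hf))) f
  id_comp f := Quot.inductionOn f fun f' => congrArg (Quot.mk _) (Category.id_comp f')
  comp_id f := Quot.inductionOn f fun f' => congrArg (Quot.mk _) (Category.comp_id f')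
  assoc f g h :=
    Quot.inductionOn f fun f' => Quot.inductionOn g fun g' => Quot.inductionOn h fun h' =>
      congrArg (Quot.mk _) (Category.assoc f' g' h')

/-- Objects of `Down(C)`: the same as those of `∫N^{--,+}_+(C)`. -/
structure Down (R : ReedyStruct C) where
  obj : StrictObj R

/-- The category `Down(C)`: hom-sets are the quotients of those of `∫N^{--,+}_+(C)`
by the symmetric-transitive closure of `≤`. -/
instance : Category (Down R) where
  Hom P Q := Quot (fun f g : P.obj ⟶ Q.obj => StrictHom.le f g)
  id P := Quot.mk _ (𝟙 P.obj)
  comp {P Q S} f g :=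
    Quot.lift
      (fun f' => Quot.lift (fun g' => Quot.mk _ (f' ≫ g'))
        (fun _ _ hg => Quot.sound (StrictHom.le_comp_left f' hg)) g)
      (fun f₁ f₂ hf => Quot.inductionOn g (fun g' =>
        Quot.sound (StrictHom.le_comp_right g' hf))) f
  id_comp f := Quot.inductionOn f fun f' => congrArg (Quot.mk _) (Category.id_comp f')
  comp_id f := Quot.inductionOn f fun f' => congrArg (Quot.mk _) (Category.comp_id f')
  assoc f g h :=
    Quot.inductionOn f fun f' => Quot.inductionOn g fun g' => Quot.inductionOn h fun h' =>
      congrArg (Quot.mk _) (Category.assoc f' g' h')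

/-- The quotient functor `∫N^{-,+}(C) → Down_*(C)`. -/
def qStar (R : ReedyStruct C) : NegObj R ⥤ DownStar R where
  obj P := ⟨P⟩
  map f := Quot.mk _ f
  map_id _ := rfl
  map_comp _ _ := rfl

/-- The inclusion functor `Down(C) → Down_*(C)`. -/
def downInclusion (R : ReedyStruct C) : Down R ⥤ DownStar R where
  obj P := ⟨P.obj.toNegObj⟩
  map {P Q} f :=
    Quot.lift (fun f' : P.obj ⟶ Q.obj => Quot.mk _ f'.1) (fun _ _ h => Quot.sound h) f
  map_id _ := rfl
  map_comp {P Q S} f g := by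
    induction f using Quot.ind
    induction g using Quot.ind
    rfl

/-- The last-component functor `∫N(C) → C`. -/
def lastChain : ChainObj C ⥤ C where
  obj P := P.X.obj (Fin.last P.n)
  map {P Q} f := f.θ (Fin.last P.n) ≫ Q.X.map (homOfLE (Fin.le_last (f.α (Fin.last P.n))))
  map_id P := by
    show 𝟙 (P.X.obj (Fin.last P.n)) ≫ P.X.map (homOfLE (Fin.le_last (Fin.last P.n))) = 𝟙 _
    rw [Category.id_comp]
    exact P.X.map_id _
  map_comp {P Q S} f g := by
    show (f.θ (Fin.last P.n) ≫ g.θ (f.α (Fin.last P.n))) ≫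
        S.X.map (homOfLE (Fin.le_last (g.α (f.α (Fin.last P.n))))) =
      (f.θ (Fin.last P.n) ≫ Q.X.map (homOfLE (Fin.le_last (f.α (Fin.last P.n))))) ≫
        g.θ (Fin.last Q.n) ≫ S.X.map (homOfLE (Fin.le_last (g.α (Fin.last Q.n))))
    rw [Category.assoc, Category.assoc, ← Category.assoc (Q.X.map _),
      g.natural (Fin.le_last (f.α (Fin.last P.n))), Category.assoc, ← Functor.map_comp,
      homOfLE_comp]

theorem lastChain_eq_of_le {P Q : ChainObj C} {f g : P ⟶ Q} (h : ChainHom.le f g) :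
    lastChain.map f = lastChain.map g := by
  show f.θ (Fin.last P.n) ≫ Q.X.map (homOfLE (Fin.le_last (f.α (Fin.last P.n)))) =
    g.θ (Fin.last P.n) ≫ Q.X.map (homOfLE (Fin.le_last (g.α (Fin.last P.n))))
  rw [h.2 (Fin.last P.n) (h.1 (Fin.last P.n)), Category.assoc, ← Functor.map_comp,
    homOfLE_comp]

/-- The forgetful functor `∫N^{-,+}(C) → ∫N(C)`. -/
def negForget (R : ReedyStruct C) : NegObj R ⥤ ChainObj C where
  obj P := P.chain
  map f := f.1
  map_id _ := rfl
  map_comp _ _ := rfl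

/-- The last-component functor `∫N^{-,+}(C) → C`. -/
def lastNeg (R : ReedyStruct C) : NegObj R ⥤ C := negForget R ⋙ lastChain

/-- The forgetful functor `∫N^{--,+}_+(C) → ∫N^{-,+}(C)`. -/
def strictForget (R : ReedyStruct C) : StrictObj R ⥤ NegObj R where
  obj P := P.toNegObj
  map f := f.1
  map_id _ := rfl
  map_comp _ _ := rfl

/-- The last-component functor `∫N^{--,+}_+(C) → C`. -/
def lastStrict (R : ReedyStruct C) : StrictObj R ⥤ C := strictForget R ⋙ lastNeg R

/-- The last-component functor `Down_*(C) → C`. -/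
def lastDownStar (R : ReedyStruct C) : DownStar R ⥤ C where
  obj P := (lastNeg R).obj P.obj
  map {P Q} f :=
    Quot.lift (fun f' : P.obj ⟶ Q.obj => (lastNeg R).map f')
      (fun _ _ h => lastChain_eq_of_le h) f
  map_id P := (lastNeg R).map_id P.obj
  map_comp {P Q S} f g := by
    induction f using Quot.ind
    induction g using Quot.ind
    exact (lastNeg R).map_comp _ _

/-- The last-component functor `Down(C) → C`. -/
def lastDown (R : ReedyStruct C) : Down R ⥤ C where
  obj P := (lastStrict R).obj P.obj
  map {P Q} f :=
    Quot.lift (fun f' : P.obj ⟶ Q.obj => (lastStrict R).map f')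
      (fun _ _ h => lastChain_eq_of_le h) f
  map_id P := (lastStrict R).map_id P.obj
  map_comp {P Q S} f g := by
    induction f using Quot.ind
    induction g using Quot.ind
    exact (lastStrict R).map_comp _ _

/-- The wide subcategory `Γ₋` of `∫N^{-,+}(C)`: morphisms of the form
`(σ, id) : ([m], X ∘ σ) → ([n], X)` with `σ` surjective, i.e. morphisms whose simplicial
component is surjective and all of whose components are identities. -/
def GammaNeg (R : ReedyStruct C) {P Q : NegObj R} (f : P ⟶ Q) : Prop :=
  Function.Surjective f.1.α ∧ ∀ i, IsIdMor (f.1.θ i)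

/-- The wide subcategory `Γ₊` of `∫N^{-,+}(C)`: morphisms `(δ, θ)` with `δ` injective. -/
def GammaPos (R : ReedyStruct C) {P Q : NegObj R} (f : P ⟶ Q) : Prop :=
  Function.Injective f.1.α

/-- Whiskering (precomposition) with `lastF` is bijective on natural transformations
between functors out of `C`. -/
def WhiskerUnique {Γ : Type u₁} [Category.{v₁} Γ] (lastF : Γ ⥤ C) : Prop :=
  ∀ {D : Type u₂} [Category.{v₂} D] (F G : C ⥤ D)
    (ε : lastF ⋙ F ⟶ lastF ⋙ G), ∃! ε' : F ⟶ G, Functor.whiskerLeft lastF ε' = ε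

/-- `lastF : Γ ⥤ C` is a weak 1-localization of `Γ` at the `last`-weak equivalences
(the morphisms sent by `lastF` to identities). -/
def IsWeakLocalizationAtLastWeq {Γ : Type u₁} [Category.{v₁} Γ] (lastF : Γ ⥤ C) : Prop :=
  (∀ {P Q : Γ} (f : P ⟶ Q), IsIdMor (lastF.map f) → IsIso (lastF.map f)) ∧
  (∀ {E : Type u₂} [Category.{v₂} E] (G : Γ ⥤ E),
    (∀ {P Q : Γ} (f : P ⟶ Q), IsIdMor (lastF.map f) → IsIso (G.map f)) →
    ∃ H : C ⥤ E, Nonempty (lastF ⋙ H ≅ G)) ∧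
  (∀ {E : Type u₂} [Category.{v₂} E] (H H' : C ⥤ E) (θ : lastF ⋙ H ≅ lastF ⋙ H'),
    ∃! θ' : H ≅ H', Functor.isoWhiskerLeft lastF θ' = θ)

/-! ### Auxiliary material for Statement 16 -/

section Aux16

theorem map_homOfLE_eqToHom {n : ℕ} (F : Fin (n + 1) ⥤ C) {i j : Fin (n + 1)} (e : i = j)
    (h : i ≤ j) : F.map (homOfLE h) = eqToHom (congrArg F.obj e) := by
  subst e
  rw [Subsingleton.elim (homOfLE h) (𝟙 i), F.map_id, eqToHom_refl]

theorem map_homOfLE_congr {n : ℕ} (F : Fin (n + 1) ⥤ C) {i j i' j' : Fin (n + 1)}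
    (e1 : i = i') (e2 : j = j') (h : i ≤ j) (h' : i' ≤ j') :
    F.map (homOfLE h) ≫ eqToHom (congrArg F.obj e2) =
      eqToHom (congrArg F.obj e1) ≫ F.map (homOfLE h') := by
  subst e1; subst e2
  rw [Subsingleton.elim h h']
  simp

theorem ChainHom.ext2 {P Q : ChainObj C} {f g : ChainHom P Q}
    (hα : ∀ i, f.α i = g.α i)
    (hθ : ∀ i (e : f.α i = g.α i), f.θ i ≫ eqToHom (congrArg Q.X.obj e) = g.θ i) :
    f = g := by
  have hA : f.α = g.α := OrderHom.ext _ _ (funext hα)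
  refine ChainHom.ext' hA ?_
  obtain ⟨α₁, θ₁, n₁⟩ := f
  obtain ⟨α₂, θ₂, n₂⟩ := g
  dsimp at hA
  subst hA
  apply heq_of_eq
  funext i
  simpa using hθ i rfl

theorem ChainHom.theta_congr {P Q : ChainObj C} (f : ChainHom P Q) {i j : Fin (P.n + 1)}
    (e : i = j) :
    f.θ i = eqToHom (congrArg P.X.obj e) ≫ f.θ j ≫
      eqToHom (congrArg Q.X.obj (congrArg f.α e)).symm := by
  subst e; simp

theorem eqToHom_aux1 {X Y Y' : C} (x : X ⟶ Y) (h1 : Y = Y') (h2 : Y' = Y) :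
    (x ≫ eqToHom h1) ≫ eqToHom h2 = x := by simp

theorem eqToHom_aux2 {X Y Z : C} (h1 : X = Y) (h2 : Y = Z) (h3 : Z = X) :
    (eqToHom h1 ≫ eqToHom h2) ≫ eqToHom h3 = 𝟙 X := by simp

theorem eqToHom_aux3 {X A B D E : C} (h1 : X = A) (h2 : A = B) (h3 : B = D) (h4 : D = E)
    (h5 : E = X) :
    𝟙 X = (eqToHom h1 ≫ eqToHom h2) ≫ eqToHom h3 ≫ eqToHom h4 ≫ eqToHom h5 := by simp

theorem eqToHom_aux4 {A A1 B B1 B2 : C} (x : A ⟶ B) (h1 : A = A1) (h2 : A1 = A) (h3 : B = B1)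
    (h4 : B1 = B2) (h5 : B2 = B) :
    (eqToHom h1 ≫ (eqToHom h2 ≫ x ≫ eqToHom h3) ≫ eqToHom h4) ≫ eqToHom h5 = x := by simp

theorem eqToHom_aux5 {A A1 B B1 B2 : C} (x : A ⟶ B) (h1 : A = A1) (h2 : A1 = A) (h3 : B = B1)
    (h4 : B1 = B2) (h5 : B2 = B) :
    (eqToHom h1 ≫ eqToHom h2 ≫ x ≫ eqToHom h3 ≫ eqToHom h4) ≫ eqToHom h5 = x := by simp

theorem eqToHom_aux6 {A B A1 A2 B1 B3 : C} (x : A ⟶ B) (h0 : B = B3) (hb : A = A1)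
    (hc : A1 = A2) (hd : A2 = A) (he : B = B1) (hf : B1 = B3) :
    x ≫ eqToHom h0 = eqToHom hb ≫ eqToHom hc ≫ (eqToHom hd ≫ x ≫ eqToHom he) ≫ eqToHom hf := by
  simp

variable {R : ReedyStruct C}

theorem NegHom.ext2 {P Q : NegObj R} {f g : P ⟶ Q}
    (hα : ∀ i : Fin (P.n + 1), f.1.α i = g.1.α i)
    (hθ : ∀ (i : Fin (P.n + 1)) (e : f.1.α i = g.1.α i),
      f.1.θ i ≫ eqToHom (congrArg Q.X.obj e) = g.1.θ i) : f = g :=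
  Subtype.ext (ChainHom.ext2 hα hθ)

theorem pos_eqToHom (R : ReedyStruct C) {x y : C} (e : x = y) : R.pos (eqToHom e) := by
  subst e; rw [eqToHom_refl]; exact R.pos_id x

/-- The pullback of a chain along a monotone reindexing map. -/
def NegObj.pull (P : NegObj R) {M : ℕ} (σ : Fin (M + 1) →o Fin (P.n + 1)) : NegObj R where
  n := M
  X := σ.monotone.functor ⋙ P.X
  negMap {i j} h := P.negMap (σ.monotone h)

/-- The projection `(σ, id) : P ∘ σ → P`. -/
def NegObj.proj (P : NegObj R) {M : ℕ} (σ : Fin (M + 1) →o Fin (P.n + 1)) :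
    P.pull σ ⟶ P :=
  ⟨{ α := σ
     θ := fun i => 𝟙 (P.X.obj (σ i))
     natural := fun {i j} h => by
       show P.X.map (homOfLE (σ.monotone h)) ≫ 𝟙 _ = 𝟙 _ ≫ P.X.map (homOfLE (σ.monotone h))
       rw [Category.comp_id, Category.id_comp] },
   fun i => R.pos_id _⟩

theorem NegObj.proj_gammaNeg (P : NegObj R) {M : ℕ} (σ : Fin (M + 1) →o Fin (P.n + 1))
    (hσ : Function.Surjective σ) : GammaNeg R (P.proj σ) :=
  ⟨hσ, fun _ => ⟨rfl, rfl⟩⟩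

/-- A section of the projection, coming from a section of `σ`. -/
def NegObj.sect (P : NegObj R) {M : ℕ} (σ : Fin (M + 1) →o Fin (P.n + 1))
    (d : Fin (P.n + 1) →o Fin (M + 1)) (hd : ∀ i, σ (d i) = i) : P ⟶ P.pull σ :=
  ⟨{ α := d
     θ := fun i => eqToHom (congrArg P.X.obj (hd i).symm)
     natural := fun {i j} h =>
       map_homOfLE_congr P.X (hd i).symm (hd j).symm h (σ.monotone (d.monotone h)) },
   fun i => pos_eqToHom R (congrArg P.X.obj (hd i).symm)⟩

theorem NegObj.sect_proj (P : NegObj R) {M : ℕ} (σ : Fin (M + 1) →o Fin (P.n + 1))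
    (d : Fin (P.n + 1) →o Fin (M + 1)) (hd : ∀ i, σ (d i) = i) :
    P.sect σ d hd ≫ P.proj σ = 𝟙 P := by
  refine NegHom.ext2 (fun i => hd i) (fun i e => ?_)
  show (eqToHom (congrArg P.X.obj (hd i).symm) ≫ 𝟙 (P.X.obj (σ (d i)))) ≫
      eqToHom (congrArg P.X.obj e) = 𝟙 (P.X.obj i)
  simp
  rfl

theorem nat_aux {P Q : ChainObj C} (f : ChainHom P Q) {i j : Fin (P.n + 1)} (hij : i ≤ j)
    {b b' : Fin (Q.n + 1)} (h1 : f.α i ≤ b) (h2 : f.α j ≤ b') (hb : b ≤ b') :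
    P.X.map (homOfLE hij) ≫ (f.θ j ≫ Q.X.map (homOfLE h2)) =
      (f.θ i ≫ Q.X.map (homOfLE h1)) ≫ Q.X.map (homOfLE hb) := by
  rw [← Category.assoc, f.natural hij, Category.assoc, ← Functor.map_comp,
    Category.assoc, ← Functor.map_comp, homOfLE_comp, homOfLE_comp]

/-- The halving surjection `[2n+1] → [n]`. -/
def sigmaHalf (P : NegObj R) : Fin (2 * P.n + 1 + 1) →o Fin (P.n + 1) where
  toFun k := ⟨k.val / 2, by have := k.isLt; omega⟩
  monotone' k k' h := by
    simp only [Fin.mk_le_mk]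
    exact Nat.div_le_div_right (Fin.le_def.mp h)

/-- The even section of `sigmaHalf`. -/
def dEven (P : NegObj R) : Fin (P.n + 1) →o Fin (2 * P.n + 1 + 1) where
  toFun i := ⟨2 * i.val, by have := i.isLt; omega⟩
  monotone' i j h := by
    simp only [Fin.mk_le_mk]
    have := Fin.le_def.mp h; omega

/-- The odd section of `sigmaHalf`. -/
def dOdd (P : NegObj R) : Fin (P.n + 1) →o Fin (2 * P.n + 1 + 1) where
  toFun i := ⟨2 * i.val + 1, by have := i.isLt; omega⟩
  monotone' i j h := by
    simp only [Fin.mk_le_mk]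
    have := Fin.le_def.mp h; omega

theorem sigmaHalf_dEven (P : NegObj R) (i : Fin (P.n + 1)) : sigmaHalf P (dEven P i) = i := by
  apply Fin.ext
  show 2 * i.val / 2 = i.val
  omega

theorem sigmaHalf_dOdd (P : NegObj R) (i : Fin (P.n + 1)) : sigmaHalf P (dOdd P i) = i := by
  apply Fin.ext
  show (2 * i.val + 1) / 2 = i.val
  omega

theorem sigmaHalf_surj (P : NegObj R) : Function.Surjective (sigmaHalf P) :=
  fun i => ⟨dEven P i, sigmaHalf_dEven P i⟩

variable {P Q : NegObj R}

/-- The interleaved simplicial component. -/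
def midAlpha (f g : P ⟶ Q) (k : Fin (2 * P.n + 1 + 1)) : Fin (Q.n + 1) :=
  if k.val % 2 = 0 then f.1.α (sigmaHalf P k) else g.1.α (sigmaHalf P k)

theorem midAlpha_even (f g : P ⟶ Q) (k : Fin (2 * P.n + 1 + 1)) (h : k.val % 2 = 0) :
    midAlpha f g k = f.1.α (sigmaHalf P k) := if_pos h

theorem midAlpha_odd (f g : P ⟶ Q) (k : Fin (2 * P.n + 1 + 1)) (h : ¬ k.val % 2 = 0) :
    midAlpha f g k = g.1.α (sigmaHalf P k) := if_neg h

theorem midAlpha_le (f g : P ⟶ Q) (hle : NegHom.le f g) (k : Fin (2 * P.n + 1 + 1)) :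
    f.1.α (sigmaHalf P k) ≤ midAlpha f g k := by
  unfold midAlpha
  by_cases h : k.val % 2 = 0
  · simp only [h, ↓reduceIte, le_refl]
  · simp only [h, ↓reduceIte]
    exact hle.1 _

theorem midAlpha_mono (f g : P ⟶ Q) (hle : NegHom.le f g)
    (hint : ∀ i : Fin P.n, g.1.α i.castSucc ≤ f.1.α i.succ) :
    Monotone (midAlpha f g) := by
  rw [Fin.monotone_iff_le_succ]
  intro k
  unfold midAlpha
  rcases Nat.even_or_odd k.val with he | ho
  · have h1 : k.castSucc.val % 2 = 0 := by
      obtain ⟨j, hj⟩ := he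
      show k.val % 2 = 0
      omega
    have h2 : ¬ k.succ.val % 2 = 0 := by
      obtain ⟨j, hj⟩ := he
      show ¬ (k.val + 1) % 2 = 0
      omega
    simp only [h1, h2, ↓reduceIte]
    have hσ : sigmaHalf P k.succ = sigmaHalf P k.castSucc := by
      apply Fin.ext
      show (k.val + 1) / 2 = k.val / 2
      obtain ⟨j, hj⟩ := he
      omega
    rw [hσ]
    exact hle.1 _
  · obtain ⟨j, hj⟩ := ho
    have h1 : ¬ k.castSucc.val % 2 = 0 := by
      show ¬ k.val % 2 = 0
      omega
    have h2 : k.succ.val % 2 = 0 := by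
      show (k.val + 1) % 2 = 0
      omega
    simp only [h1, h2, ↓reduceIte]
    have hjlt : j < P.n := by have := k.isLt; omega
    have hσ1 : sigmaHalf P k.castSucc = Fin.castSucc ⟨j, hjlt⟩ := by
      apply Fin.ext
      show k.val / 2 = j
      omega
    have hσ2 : sigmaHalf P k.succ = Fin.succ ⟨j, hjlt⟩ := by
      apply Fin.ext
      show (k.val + 1) / 2 = j + 1
      omega
    rw [hσ1, hσ2]
    exact hint ⟨j, hjlt⟩

/-- The interleaved positive component. -/
def midTheta (f g : P ⟶ Q) (k : Fin (2 * P.n + 1 + 1)) :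
    P.X.obj (sigmaHalf P k) ⟶ Q.X.obj (midAlpha f g k) :=
  if h : k.val % 2 = 0 then
    f.1.θ (sigmaHalf P k) ≫ eqToHom (congrArg Q.X.obj (midAlpha_even f g k h).symm)
  else
    g.1.θ (sigmaHalf P k) ≫ eqToHom (congrArg Q.X.obj (midAlpha_odd f g k h).symm)

theorem midTheta_eq (f g : P ⟶ Q) (hle : NegHom.le f g) (k : Fin (2 * P.n + 1 + 1)) :
    midTheta f g k = f.1.θ (sigmaHalf P k) ≫ Q.X.map (homOfLE (midAlpha_le f g hle k)) := by
  unfold midTheta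
  by_cases h : k.val % 2 = 0
  · simp only [h, ↓reduceDIte]
    rw [map_homOfLE_eqToHom Q.X (midAlpha_even f g k h).symm]
    rfl
  · simp only [h, ↓reduceDIte]
    erw [hle.2 (sigmaHalf P k) (hle.1 _), Category.assoc]
    congr 1
    have := map_homOfLE_congr Q.X rfl (midAlpha_odd f g k h).symm
      (hle.1 (sigmaHalf P k)) (midAlpha_le f g hle k)
    simp only [eqToHom_refl, Category.id_comp] at this
    exact this

/-- The interleaving morphism out of the doubled chain. -/
def midHom (f g : P ⟶ Q) (hle : NegHom.le f g)
    (hint : ∀ i : Fin P.n, g.1.α i.castSucc ≤ f.1.α i.succ) :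
    P.pull (sigmaHalf P) ⟶ Q :=
  ⟨{ α := ⟨midAlpha f g, midAlpha_mono f g hle hint⟩
     θ := midTheta f g
     natural := fun {k k'} h => by
       erw [midTheta_eq f g hle, midTheta_eq f g hle]
       exact nat_aux f.1 ((sigmaHalf P).monotone h) _ _
         (midAlpha_mono f g hle hint h) },
   fun k => by
     show R.pos (midTheta f g k)
     unfold midTheta
     split
     · exact R.pos_comp _ _ (f.2 _) (pos_eqToHom R _)
     · exact R.pos_comp _ _ (g.2 _) (pos_eqToHom R _)⟩

theorem sect_midHom_even (f g : P ⟶ Q) (hle : NegHom.le f g)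
    (hint : ∀ i : Fin P.n, g.1.α i.castSucc ≤ f.1.α i.succ) :
    P.sect (sigmaHalf P) (dEven P) (sigmaHalf_dEven P) ≫ midHom f g hle hint = f := by
  have heven : ∀ i : Fin (P.n + 1), (dEven P i).val % 2 = 0 := by
    intro i
    show 2 * i.val % 2 = 0
    omega
  refine NegHom.ext2 (fun i => ?_) (fun i e => ?_)
  · show midAlpha f g (dEven P i) = f.1.α i
    rw [midAlpha_even f g _ (heven i), sigmaHalf_dEven P i]
  · show (eqToHom (congrArg P.X.obj (sigmaHalf_dEven P i).symm) ≫
        midTheta f g (dEven P i)) ≫ eqToHom (congrArg Q.X.obj e) = f.1.θ i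
    rw [midTheta_eq f g hle, ChainHom.theta_congr f.1 (sigmaHalf_dEven P i),
      map_homOfLE_eqToHom Q.X (midAlpha_even f g (dEven P i) (heven i)).symm]
    exact eqToHom_aux4 _ _ _ _ _ _

theorem sect_midHom_odd (f g : P ⟶ Q) (hle : NegHom.le f g)
    (hint : ∀ i : Fin P.n, g.1.α i.castSucc ≤ f.1.α i.succ) :
    P.sect (sigmaHalf P) (dOdd P) (sigmaHalf_dOdd P) ≫ midHom f g hle hint = g := by
  have hodd : ∀ i : Fin (P.n + 1), ¬ (dOdd P i).val % 2 = 0 := by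
    intro i
    show ¬ (2 * i.val + 1) % 2 = 0
    omega
  refine NegHom.ext2 (fun i => ?_) (fun i e => ?_)
  · show midAlpha f g (dOdd P i) = g.1.α i
    rw [midAlpha_odd f g _ (hodd i), sigmaHalf_dOdd P i]
  · show (eqToHom (congrArg P.X.obj (sigmaHalf_dOdd P i).symm) ≫
        midTheta f g (dOdd P i)) ≫ eqToHom (congrArg Q.X.obj e) = g.1.θ i
    have hmt : midTheta f g (dOdd P i) = g.1.θ (sigmaHalf P (dOdd P i)) ≫
        eqToHom (congrArg Q.X.obj (midAlpha_odd f g (dOdd P i) (hodd i)).symm) :=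
      dif_neg (hodd i)
    rw [hmt, ChainHom.theta_congr g.1 (sigmaHalf_dOdd P i)]
    exact eqToHom_aux4 (C := C) _ _ _ _ _ _

theorem keyA {E : Type u₂} [Category.{v₂} E] (G : NegObj R ⥤ E)
    (hG : ∀ {P' Q' : NegObj R} (f : P' ⟶ Q'), GammaNeg R f → IsIso (G.map f))
    (f g : P ⟶ Q) (hle : NegHom.le f g)
    (hint : ∀ i : Fin P.n, g.1.α i.castSucc ≤ f.1.α i.succ) :
    G.map f = G.map g := by
  have hiso : IsIso (G.map (P.proj (sigmaHalf P))) :=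
    hG _ (P.proj_gammaNeg _ (sigmaHalf_surj P))
  have hsect : ∀ (d : Fin (P.n + 1) →o Fin (2 * P.n + 1 + 1))
      (hd : ∀ i, sigmaHalf P (d i) = i),
      G.map (P.sect (sigmaHalf P) d hd) = inv (G.map (P.proj (sigmaHalf P))) := by
    intro d hd
    have h1 : G.map (P.sect (sigmaHalf P) d hd) ≫ G.map (P.proj (sigmaHalf P)) = 𝟙 _ := by
      rw [← G.map_comp, P.sect_proj, G.map_id]
    calc G.map (P.sect (sigmaHalf P) d hd)
        = G.map (P.sect (sigmaHalf P) d hd) ≫ G.map (P.proj (sigmaHalf P)) ≫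
            inv (G.map (P.proj (sigmaHalf P))) := by
          rw [IsIso.hom_inv_id, Category.comp_id]
      _ = inv (G.map (P.proj (sigmaHalf P))) := by
          rw [← Category.assoc, h1, Category.id_comp]
  conv_lhs => rw [← sect_midHom_even f g hle hint]
  conv_rhs => rw [← sect_midHom_odd f g hle hint]
  rw [G.map_comp, G.map_comp, hsect _ (sigmaHalf_dEven P), hsect _ (sigmaHalf_dOdd P)]

/-- The interpolating simplicial component: agree with `g` on indices `≥ t`, with `f` below. -/
def interpAlpha (f g : P ⟶ Q) (t : ℕ) (i : Fin (P.n + 1)) : Fin (Q.n + 1) :=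
  if t ≤ i.val then g.1.α i else f.1.α i

theorem interpAlpha_le (f g : P ⟶ Q) (hle : NegHom.le f g) (t : ℕ) (i : Fin (P.n + 1)) :
    f.1.α i ≤ interpAlpha f g t i := by
  unfold interpAlpha
  by_cases h : t ≤ i.val
  · simp only [h, ↓reduceIte]
    exact hle.1 i
  · simp only [h, ↓reduceIte, le_refl]

theorem interpAlpha_mono (f g : P ⟶ Q) (hle : NegHom.le f g) (t : ℕ) :
    Monotone (interpAlpha f g t) := by
  intro i j hij
  unfold interpAlpha
  by_cases h1 : t ≤ i.val
  · have h2 : t ≤ j.val := le_trans h1 (Fin.le_def.mp hij)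
    simp only [h1, h2, ↓reduceIte]
    exact g.1.α.monotone hij
  · simp only [h1, ↓reduceIte]
    by_cases h2 : t ≤ j.val
    · simp only [h2, ↓reduceIte]
      exact le_trans (f.1.α.monotone hij) (hle.1 j)
    · simp only [h2, ↓reduceIte]
      exact f.1.α.monotone hij

/-- The interpolating positive component. -/
def interpTheta (f g : P ⟶ Q) (t : ℕ) (i : Fin (P.n + 1)) :
    P.X.obj i ⟶ Q.X.obj (interpAlpha f g t i) :=
  if h : t ≤ i.val then
    g.1.θ i ≫ eqToHom (congrArg Q.X.obj (if_pos h : interpAlpha f g t i = g.1.α i).symm)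
  else
    f.1.θ i ≫ eqToHom (congrArg Q.X.obj (if_neg h : interpAlpha f g t i = f.1.α i).symm)

theorem interpTheta_eq (f g : P ⟶ Q) (hle : NegHom.le f g) (t : ℕ) (i : Fin (P.n + 1)) :
    interpTheta f g t i = f.1.θ i ≫ Q.X.map (homOfLE (interpAlpha_le f g hle t i)) := by
  unfold interpTheta
  by_cases h : t ≤ i.val
  · simp only [h, ↓reduceDIte]
    erw [hle.2 i (hle.1 i), Category.assoc]
    congr 1
    have := map_homOfLE_congr Q.X rfl
      ((if_pos h : interpAlpha f g t i = g.1.α i)).symm (hle.1 i)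
      (interpAlpha_le f g hle t i)
    simp only [eqToHom_refl, Category.id_comp] at this
    exact this
  · simp only [h, ↓reduceDIte]
    erw [map_homOfLE_eqToHom Q.X ((if_neg h : interpAlpha f g t i = f.1.α i)).symm]
    rfl

/-- The interpolating morphism. -/
def interpHom (f g : P ⟶ Q) (hle : NegHom.le f g) (t : ℕ) : P ⟶ Q :=
  ⟨{ α := ⟨interpAlpha f g t, interpAlpha_mono f g hle t⟩
     θ := interpTheta f g t
     natural := fun {i j} h => by
       erw [interpTheta_eq f g hle, interpTheta_eq f g hle]
       exact nat_aux f.1 h _ _ (interpAlpha_mono f g hle t h) },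
   fun i => by
     show R.pos (interpTheta f g t i)
     unfold interpTheta
     split
     · exact R.pos_comp _ _ (g.2 _) (pos_eqToHom R _)
     · exact R.pos_comp _ _ (f.2 _) (pos_eqToHom R _)⟩

theorem interpHom_alpha (f g : P ⟶ Q) (hle : NegHom.le f g) (t : ℕ) (i : Fin (P.n + 1)) :
    (interpHom f g hle t).1.α i = interpAlpha f g t i := rfl

theorem interpHom_theta (f g : P ⟶ Q) (hle : NegHom.le f g) (t : ℕ) (i : Fin (P.n + 1)) :
    (interpHom f g hle t).1.θ i = interpTheta f g t i := rfl

theorem interpHom_zero (f g : P ⟶ Q) (hle : NegHom.le f g) : interpHom f g hle 0 = g := by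
  refine NegHom.ext2 (fun i => ?_) (fun i e => ?_)
  · show interpAlpha f g 0 i = g.1.α i
    exact if_pos (Nat.zero_le _)
  · show interpTheta f g 0 i ≫ eqToHom (congrArg Q.X.obj e) = g.1.θ i
    have : interpTheta f g 0 i = g.1.θ i ≫
        eqToHom (congrArg Q.X.obj (if_pos (Nat.zero_le _) :
          interpAlpha f g 0 i = g.1.α i).symm) := dif_pos (Nat.zero_le _)
    rw [this]
    exact eqToHom_aux1 _ _ _

theorem interpHom_top (f g : P ⟶ Q) (hle : NegHom.le f g) :
    interpHom f g hle (P.n + 1) = f := by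
  refine NegHom.ext2 (fun i => ?_) (fun i e => ?_)
  · show interpAlpha f g (P.n + 1) i = f.1.α i
    exact if_neg (by have : i.val < P.n + 1 := i.isLt; omega)
  · show interpTheta f g (P.n + 1) i ≫ eqToHom (congrArg Q.X.obj e) = f.1.θ i
    have hni : ¬ P.n + 1 ≤ i.val := by have : i.val < P.n + 1 := i.isLt; omega
    have : interpTheta f g (P.n + 1) i = f.1.θ i ≫
        eqToHom (congrArg Q.X.obj (if_neg hni :
          interpAlpha f g (P.n + 1) i = f.1.α i).symm) := dif_neg hni
    rw [this]
    exact eqToHom_aux1 _ _ _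

theorem interpHom_le (f g : P ⟶ Q) (hle : NegHom.le f g) (t : ℕ) :
    NegHom.le (interpHom f g hle (t + 1)) (interpHom f g hle t) := by
  constructor
  · intro i
    erw [interpHom_alpha, interpHom_alpha]
    unfold interpAlpha
    by_cases h1 : t + 1 ≤ i.val
    · have h2 : t ≤ i.val := le_trans (Nat.le_succ t) h1
      simp only [h1, h2, ↓reduceIte, le_refl]
    · simp only [h1, ↓reduceIte]
      by_cases h2 : t ≤ i.val
      · simp only [h2, ↓reduceIte]
        exact hle.1 i
      · simp only [h2, ↓reduceIte, le_refl]
  · intro i hi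
    erw [interpHom_theta, interpHom_theta, interpTheta_eq f g hle,
      interpTheta_eq f g hle, Category.assoc]
    congr 1
    have hc : Q.chain.X.map (homOfLE hi) = Q.X.map (homOfLE hi) := rfl
    erw [hc, ← Functor.map_comp, homOfLE_comp]
    rfl

theorem interpHom_int (f g : P ⟶ Q) (hle : NegHom.le f g) (t : ℕ) (i : Fin P.n) :
    (interpHom f g hle t).1.α i.castSucc ≤ (interpHom f g hle (t + 1)).1.α i.succ := by
  rw [interpHom_alpha, interpHom_alpha]
  unfold interpAlpha
  have hv1 : i.castSucc.val = i.val := rfl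
  have hv2 : i.succ.val = i.val + 1 := rfl
  by_cases h1 : t ≤ i.castSucc.val
  · have h2 : t + 1 ≤ i.succ.val := by omega
    simp only [h1, h2, ↓reduceIte]
    exact g.1.α.monotone (Fin.castSucc_le_succ i)
  · have h2 : ¬ t + 1 ≤ i.succ.val := by rw [hv2]; rw [hv1] at h1; omega
    simp only [h1, h2, ↓reduceIte]
    exact f.1.α.monotone (Fin.castSucc_le_succ i)

theorem keyB {E : Type u₂} [Category.{v₂} E] (G : NegObj R ⥤ E)
    (hG : ∀ {P' Q' : NegObj R} (f : P' ⟶ Q'), GammaNeg R f → IsIso (G.map f))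
    (f g : P ⟶ Q) (hle : NegHom.le f g) : G.map f = G.map g := by
  have main : ∀ t : ℕ, G.map (interpHom f g hle t) = G.map g := by
    intro t
    induction t with
    | zero => rw [interpHom_zero]
    | succ t ih =>
      rw [← ih]
      exact keyA G hG _ _ (interpHom_le f g hle t) (interpHom_int f g hle t)
  rw [← interpHom_top f g hle, main (P.n + 1)]

open Classical in
theorem invAlpha_ne (f : P ⟶ Q) (hsurj : Function.Surjective f.1.α) (j : Fin (Q.n + 1)) :
    (Finset.univ.filter fun i => f.1.α i = j).Nonempty := by
  obtain ⟨i, hi⟩ := hsurj j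
  exact ⟨i, Finset.mem_filter.mpr ⟨Finset.mem_univ _, hi⟩⟩

open Classical in
/-- The minimal section of a surjective monotone simplicial map. -/
noncomputable def invAlphaFun (f : P ⟶ Q) (hsurj : Function.Surjective f.1.α)
    (j : Fin (Q.n + 1)) : Fin (P.n + 1) :=
  (Finset.univ.filter fun i => f.1.α i = j).min' (invAlpha_ne f hsurj j)

theorem invAlpha_sect (f : P ⟶ Q) (hsurj : Function.Surjective f.1.α) (j : Fin (Q.n + 1)) :
    f.1.α (invAlphaFun f hsurj j) = j := by
  have := Finset.min'_mem _ (invAlpha_ne f hsurj j)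
  simp at this
  exact this

open Classical in
theorem invAlpha_retr (f : P ⟶ Q) (hsurj : Function.Surjective f.1.α) (i : Fin (P.n + 1)) :
    invAlphaFun f hsurj (f.1.α i) ≤ i :=
  by
    unfold invAlphaFun
    apply Finset.min'_le
    exact Finset.mem_filter.mpr ⟨Finset.mem_univ i, rfl⟩

theorem invAlpha_mono (f : P ⟶ Q) (hsurj : Function.Surjective f.1.α) :
    Monotone (invAlphaFun f hsurj) := by
  intro j j' hj
  rcases le_or_gt (invAlphaFun f hsurj j) (invAlphaFun f hsurj j') with h | h
  · exact h
  · have h1 : j' ≤ j := by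
      rw [← invAlpha_sect f hsurj j, ← invAlpha_sect f hsurj j']
      exact f.1.α.monotone h.le
    exact le_of_eq (congrArg _ (le_antisymm hj h1))

theorem theta_isId_obj (f : P ⟶ Q) (hid : ∀ i, IsIdMor (f.1.θ i)) (i : Fin (P.n + 1)) :
    P.X.obj i = Q.X.obj (f.1.α i) := (hid i).choose

theorem theta_isId_eq (f : P ⟶ Q) (hid : ∀ i, IsIdMor (f.1.θ i)) (i : Fin (P.n + 1)) :
    f.1.θ i = eqToHom (theta_isId_obj f hid i) := (hid i).choose_spec

theorem invObjEq (f : P ⟶ Q) (hsurj : Function.Surjective f.1.α)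
    (hid : ∀ i, IsIdMor (f.1.θ i)) (j : Fin (Q.n + 1)) :
    P.X.obj (invAlphaFun f hsurj j) = Q.X.obj j :=
  (theta_isId_obj f hid _).trans (congrArg Q.X.obj (invAlpha_sect f hsurj j))

theorem map_between_eq {n : ℕ} (F : Fin (n + 1) ⥤ C) {i j i' j' : Fin (n + 1)}
    (e1 : i = i') (e2 : j = j') (h : i ≤ j) (h' : i' ≤ j') :
    F.map (homOfLE h) =
      eqToHom (congrArg F.obj e1) ≫ F.map (homOfLE h') ≫ eqToHom (congrArg F.obj e2).symm := by
  subst e1; subst e2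
  rw [Subsingleton.elim h h']
  simp

theorem pull_map_eq (f : P ⟶ Q) (hid : ∀ i, IsIdMor (f.1.θ i)) {i i' : Fin (P.n + 1)}
    (h : i ≤ i') :
    P.chain.X.map (homOfLE h) =
      eqToHom (theta_isId_obj f hid i) ≫ Q.chain.X.map (homOfLE (f.1.α.monotone h)) ≫
        eqToHom (theta_isId_obj f hid i').symm := by
  have hn := f.1.natural h
  rw [theta_isId_eq f hid, theta_isId_eq f hid] at hn
  erw [← Category.assoc, ← hn, Category.assoc, eqToHom_trans, eqToHom_refl, Category.comp_id]

/-- The quasi-inverse of a `Γ₋`-morphism. -/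
noncomputable def gammaInv (f : P ⟶ Q) (hsurj : Function.Surjective f.1.α)
    (hid : ∀ i, IsIdMor (f.1.θ i)) : Q ⟶ P :=
  ⟨{ α := ⟨invAlphaFun f hsurj, invAlpha_mono f hsurj⟩
     θ := fun j => eqToHom (invObjEq f hsurj hid j).symm
     natural := fun {j j'} h => by
       erw [pull_map_eq f hid,
         map_between_eq Q.chain.X (invAlpha_sect f hsurj j) (invAlpha_sect f hsurj j')
           (f.1.α.monotone (invAlpha_mono f hsurj h)) h]
       exact eqToHom_aux6 _ _ _ _ _ _ _ },
   fun j => pos_eqToHom R (invObjEq f hsurj hid j).symm⟩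

theorem gammaInv_comp (f : P ⟶ Q) (hsurj : Function.Surjective f.1.α)
    (hid : ∀ i, IsIdMor (f.1.θ i)) : gammaInv f hsurj hid ≫ f = 𝟙 Q := by
  refine NegHom.ext2 (fun j => ?_) (fun j e => ?_)
  · show f.1.α (invAlphaFun f hsurj j) = j
    exact invAlpha_sect f hsurj j
  · show (eqToHom (invObjEq f hsurj hid j).symm ≫ f.1.θ (invAlphaFun f hsurj j)) ≫
      eqToHom (congrArg Q.X.obj e) = 𝟙 (Q.X.obj j)
    rw [theta_isId_eq f hid]
    exact eqToHom_aux2 _ _ _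

theorem comp_gammaInv_le (f : P ⟶ Q) (hsurj : Function.Surjective f.1.α)
    (hid : ∀ i, IsIdMor (f.1.θ i)) :
    NegHom.le (f ≫ gammaInv f hsurj hid) (𝟙 P) := by
  constructor
  · intro i
    show invAlphaFun f hsurj (f.1.α i) ≤ i
    exact invAlpha_retr f hsurj i
  · intro i hi
    show 𝟙 (P.X.obj i) =
      (f.1.θ i ≫ eqToHom (invObjEq f hsurj hid (f.1.α i)).symm) ≫ P.chain.X.map (homOfLE hi)
    erw [pull_map_eq f hid hi, theta_isId_eq f hid i,
      map_homOfLE_eqToHom Q.chain.X (invAlpha_sect f hsurj (f.1.α i))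
        (f.1.α.monotone hi)]
    exact eqToHom_aux3 _ _ _ _ _

end Aux16

section Statements

variable (R : ReedyStruct C)

theorem statement16 :
    (∀ {P Q : NegObj R} (f : P ⟶ Q), GammaNeg R f → IsIso ((qStar R).map f)) ∧
    (∀ {E : Type u₂} [Category.{v₂} E] (G : NegObj R ⥤ E),
      (∀ {P Q : NegObj R} (f : P ⟶ Q), GammaNeg R f → IsIso (G.map f)) →
      ∃! H : DownStar R ⥤ E, qStar R ⋙ H = G) := by
  constructor
  · intro P Q f hf
    obtain ⟨hsurj, hid⟩ := hf
    refine ⟨⟨(qStar R).map (gammaInv f hsurj hid), ?_, ?_⟩⟩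
    · show Quot.mk _ (f ≫ gammaInv f hsurj hid) = Quot.mk _ (𝟙 P)
      exact Quot.sound (comp_gammaInv_le f hsurj hid)
    · show Quot.mk _ (gammaInv f hsurj hid ≫ f) = Quot.mk _ (𝟙 Q)
      rw [gammaInv_comp f hsurj hid]
  · intro E _ G hG
    refine ⟨{ obj := fun P => G.obj P.obj
              map := fun {P Q} h => Quot.lift (fun h' => G.map h')
                (fun a b hab => keyB G (fun f' hf' => hG f' hf') a b hab) h
              map_id := fun P => G.map_id P.obj
              map_comp := fun {P Q S} h k => Quot.inductionOn h fun h' =>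
                Quot.inductionOn k fun k' => G.map_comp h' k' }, ?_, ?_⟩
    · rfl
    · intro H' hH'
      refine CategoryTheory.Functor.ext (fun P => ?_) (fun P Q h => ?_)
      · exact Functor.congr_obj hH' P.obj
      · refine Quot.inductionOn h fun h' => ?_
        exact Functor.congr_hom hH' h'

end Statements

end ReedyPaper
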